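/- Let G ≤ Homeo(S¹), let I₁, I₂, I₃ ⊆ S¹ be three pairwise disjoint proper arcs, and let g₁, g₂, g₃ ∈ G be such that g_i is supported inside I_i for i = 1, 2, 3. Then for every g ∈ G at least one of the following holds: (1) [g₁^g, g₁] = 1 or [g₁^g, g₂] = 1 or [g₁^g, g₃] = 1; (2) there exists i ∈ {1,2,3} such that [g₂^g, g_i] = 1 and [g₃^g, g_i] = 1. In particular, for every g ∈ G there exist i, j ∈ {1,2,3} with [g_i^g, g_j] = 1. -/

import Mathlib

open Set

/-- The circle `S¹ = ℝ/ℤ`. -/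
abbrev S1 := UnitAddCircle

/-- A permutation of the circle which is a homeomorphism. -/
def IsCircleHomeo (g : Equiv.Perm S1) : Prop := Continuous g ∧ Continuous g.symm

/-- A permutation is supported inside a set `I` if it fixes the complement of `I`
pointwise. -/
def SupportedIn (g : Equiv.Perm S1) (I : Set S1) : Prop :=
  ∀ x : S1, x ∉ I → g x = x

instance fact_zero_lt_one_real : Fact ((0 : ℝ) < 1) := ⟨one_pos⟩

/-- coordinates on the circle cut at `a`. -/
noncomputable def ee (a : ℝ) (x : S1) : ℝ := (AddCircle.equivIco 1 a x : ℝ)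

lemma ee_inj {a : ℝ} : Function.Injective (ee a) := fun x y h =>
  (AddCircle.equivIco 1 a).injective (Subtype.ext h)

lemma ee_mem (a : ℝ) (x : S1) : ee a x ∈ Ico a (a + 1) := (AddCircle.equivIco 1 a x).2

lemma coe_ee (a : ℝ) (x : S1) : ((ee a x : ℝ) : S1) = x :=
  (AddCircle.equivIco 1 a).symm_apply_apply x

lemma ee_coe {a t : ℝ} (ht : t ∈ Ico a (a + 1)) : ee a (t : S1) = t := by
  have : AddCircle.equivIco 1 a (t : S1) = ⟨t, ht⟩ := by
    rw [Equiv.apply_eq_iff_eq_symm_apply]; rfl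
  rw [ee, this]

lemma trace_ordConn {a : ℝ} {S : Set S1} (hS : IsPreconnected S) (ha : ((a : ℝ) : S1) ∉ S)
    {x y : S1} (hx : x ∈ S) (hy : y ∈ S) {t : ℝ} (h1 : ee a x ≤ t) (h2 : t ≤ ee a y) :
    ∃ z ∈ S, ee a z = t := by
  have hcont : ContinuousOn (ee a) S := by
    intro z hz
    have hza : z ≠ ((a : ℝ) : S1) := fun h => ha (h ▸ hz)
    exact (continuous_subtype_val.continuousAt.comp
      (AddCircle.continuousAt_equivIco 1 a hza)).continuousWithinAt
  have himg : IsPreconnected (ee a '' S) := hS.image _ hcont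
  have := himg.ordConnected.out ⟨x, hx, rfl⟩ ⟨y, hy, rfl⟩ ⟨h1, h2⟩
  obtain ⟨z, hz, hez⟩ := this
  exact ⟨z, hz, hez⟩

lemma wrap {a : ℝ} {S : Set S1} (hS : IsPreconnected S) (ha : ((a : ℝ) : S1) ∈ S)
    {y z₁ z₂ : S1} (hy : y ∈ S) (h₁ : z₁ ∉ S) (h₂ : z₂ ∉ S)
    (l₁ : ee a z₁ < ee a y) (l₂ : ee a y < ee a z₂) : False := by
  have hbz : ((ee a z₁ : ℝ) : S1) = z₁ := coe_ee a z₁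
  have hblt : ee a z₁ < a + 1 := (ee_mem a z₁).2
  have hab : a < ee a z₁ :=
    lt_of_le_of_ne (ee_mem a z₁).1 (fun h => h₁ (by rw [← hbz, ← h]; exact ha))
  have ha1 : ee a y < a + 1 := (ee_mem a y).2
  have hz2lt : ee a z₂ < a + 1 := (ee_mem a z₂).2
  have hy' : ee (ee a z₁) y = ee a y := by
    conv_lhs => rw [← coe_ee a y]
    exact ee_coe ⟨l₁.le, by linarith⟩
  have hz₂' : ee (ee a z₁) z₂ = ee a z₂ := by
    conv_lhs => rw [← coe_ee a z₂]
    exact ee_coe ⟨(l₁.trans l₂).le, by linarith⟩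
  have ha' : ee (ee a z₁) ((a : ℝ) : S1) = a + 1 := by
    have h2 : ((a : ℝ) : S1) = ((a + 1 : ℝ) : S1) := (AddCircle.coe_add_period 1 a).symm
    rw [h2]
    exact ee_coe ⟨by linarith, by linarith⟩
  have hbS : ((ee a z₁ : ℝ) : S1) ∉ S := by rwa [hbz]
  obtain ⟨z, hz, hez⟩ := trace_ordConn hS hbS hy ha (t := ee a z₂)
    (by rw [hy']; exact l₂.le) (by rw [ha']; exact hz2lt.le)
  exact h₂ ((ee_inj (hez.trans hz₂'.symm)) ▸ hz)

lemma sameA {a : ℝ} {J I I' : Set S1} (hJ : IsPreconnected J)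
    (hI : IsPreconnected I) (hI' : IsPreconnected I') (hd : Disjoint I I')
    (haJ : ((a : ℝ) : S1) ∈ J) (haI : ((a : ℝ) : S1) ∉ I) (haI' : ((a : ℝ) : S1) ∉ I')
    {q c q' c' : S1} (hqJ : q ∈ J) (hqI : q ∈ I) (hcI : c ∈ I) (hcJ : c ∉ J)
    (hq'J : q' ∈ J) (hq'I : q' ∈ I') (hc'I : c' ∈ I') (hc'J : c' ∉ J)
    (l : ee a q < ee a c) (l' : ee a q' < ee a c') : False := by
  have h1 : ee a q < ee a c' := by
    rcases lt_trichotomy (ee a q) (ee a c') with h | h | h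
    · exact h
    · cases ee_inj h; exact absurd hqJ hc'J
    · exact absurd (wrap hJ haJ hqJ hc'J hcJ h l) id
  have h2 : ee a q' < ee a c := by
    rcases lt_trichotomy (ee a q') (ee a c) with h | h | h
    · exact h
    · cases ee_inj h; exact absurd hq'J hcJ
    · exact absurd (wrap hJ haJ hq'J hcJ hc'J h l') id
  obtain ⟨z, hz, hez⟩ := trace_ordConn hI haI hqI hcI
    (t := max (ee a q) (ee a q')) (le_max_left _ _) (max_le l.le h2.le)
  obtain ⟨z', hz', hez'⟩ := trace_ordConn hI' haI' hq'I hc'I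
    (t := max (ee a q) (ee a q')) (le_max_right _ _) (max_le h1.le l'.le)
  have : z = z' := ee_inj (hez.trans hez'.symm)
  exact disjoint_left.1 hd hz (this ▸ hz')

lemma sameB {a : ℝ} {J I I' : Set S1} (hJ : IsPreconnected J)
    (hI : IsPreconnected I) (hI' : IsPreconnected I') (hd : Disjoint I I')
    (haJ : ((a : ℝ) : S1) ∈ J) (haI : ((a : ℝ) : S1) ∉ I) (haI' : ((a : ℝ) : S1) ∉ I')
    {q c q' c' : S1} (hqJ : q ∈ J) (hqI : q ∈ I) (hcI : c ∈ I) (hcJ : c ∉ J)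
    (hq'J : q' ∈ J) (hq'I : q' ∈ I') (hc'I : c' ∈ I') (hc'J : c' ∉ J)
    (l : ee a c < ee a q) (l' : ee a c' < ee a q') : False := by
  have h1 : ee a c' < ee a q := by
    rcases lt_trichotomy (ee a c') (ee a q) with h | h | h
    · exact h
    · cases ee_inj h; exact absurd hqJ hc'J
    · exact absurd (wrap hJ haJ hqJ hcJ hc'J l h) id
  have h2 : ee a c < ee a q' := by
    rcases lt_trichotomy (ee a c) (ee a q') with h | h | h
    · exact h
    · cases ee_inj h; exact absurd hq'J hcJ
    · exact absurd (wrap hJ haJ hq'J hc'J hcJ l' h) id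
  obtain ⟨z, hz, hez⟩ := trace_ordConn hI haI hcI hqI
    (t := min (ee a q) (ee a q')) (le_min l.le h2.le) (min_le_left _ _)
  obtain ⟨z', hz', hez'⟩ := trace_ordConn hI' haI' hc'I hq'I
    (t := min (ee a q) (ee a q')) (le_min h1.le l'.le) (min_le_right _ _)
  have : z = z' := ee_inj (hez.trans hez'.symm)
  exact disjoint_left.1 hd hz (this ▸ hz')

lemma oppo {a : ℝ} {J A B C : Set S1} (hJ : IsPreconnected J) (hA : IsPreconnected A)
    (hdAB : Disjoint A B) (hdAC : Disjoint A C)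
    (haJ : ((a : ℝ) : S1) ∈ J) (haA : ((a : ℝ) : S1) ∈ A)
    {c₁ q₂ c₂ q₃ c₃ : S1} (hc₁ : c₁ ∈ A) (hc₁J : c₁ ∉ J)
    (hq₂J : q₂ ∈ J) (hq₂ : q₂ ∈ B) (hc₂ : c₂ ∈ B) (hc₂J : c₂ ∉ J)
    (hq₃J : q₃ ∈ J) (hq₃ : q₃ ∈ C) (hc₃ : c₃ ∈ C) (hc₃J : c₃ ∉ J)
    (l₂ : ee a q₂ < ee a c₂) (l₃ : ee a c₃ < ee a q₃) : False := by
  have h1 : ee a q₂ < ee a c₁ := by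
    rcases lt_trichotomy (ee a q₂) (ee a c₁) with h | h | h
    · exact h
    · cases ee_inj h; exact absurd hq₂J hc₁J
    · exact absurd (wrap hJ haJ hq₂J hc₁J hc₂J h l₂) id
  have h2 : ee a c₁ < ee a q₃ := by
    rcases lt_trichotomy (ee a c₁) (ee a q₃) with h | h | h
    · exact h
    · cases ee_inj h; exact absurd hq₃J hc₁J
    · exact absurd (wrap hJ haJ hq₃J hc₃J hc₁J l₃ h) id
  have hq₂A : q₂ ∉ A := fun h => disjoint_left.1 hdAB h hq₂
  have hq₃A : q₃ ∉ A := fun h => disjoint_left.1 hdAC h hq₃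
  exact wrap hA haA hc₁ hq₂A hq₃A h1 h2

lemma SupportedIn.conj {u : Equiv.Perm S1} {I : Set S1} (h : SupportedIn u I)
    (g : Equiv.Perm S1) : SupportedIn (g * u * g⁻¹) (g '' I) := by
  intro x hx
  have hm : g⁻¹ x ∉ I := fun hm => hx ⟨g⁻¹ x, hm, g.apply_symm_apply x⟩
  show g (u (g⁻¹ x)) = x
  rw [h _ hm]; exact g.apply_symm_apply x

lemma SupportedIn.maps {u : Equiv.Perm S1} {I : Set S1} (h : SupportedIn u I)
    {x : S1} (hx : x ∈ I) : u x ∈ I := by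
  by_contra hxc
  have h2 : u (u x) = u x := h _ hxc
  have h3 : u x = x := u.injective h2
  exact hxc (by rw [h3]; exact hx)

lemma commute_of_disjoint {u v : Equiv.Perm S1} {A B : Set S1} (hd : Disjoint A B)
    (hu : SupportedIn u A) (hv : SupportedIn v B) : Commute u v := by
  apply Equiv.ext
  intro x
  show u (v x) = v (u x)
  by_cases hxA : x ∈ A
  · have hxB : x ∉ B := fun h => disjoint_left.1 hd hxA h
    have huB : u x ∉ B := fun h => disjoint_left.1 hd (hu.maps hxA) h
    rw [hv _ hxB, hv _ huB]
  · by_cases hxB : x ∈ B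
    · have hvA : v x ∉ A := fun h => disjoint_left.1 hd h (hv.maps hxB)
      rw [hu _ hxA, hu _ hvA]
    · rw [hu _ hxA, hv _ hxB, hu _ hxA]

/-- **(Le Boudec--Matte Bon, Lemma 5.6.)** Let `G ≤ Homeo(S¹)`, let `I₁, I₂, I₃` be three
pairwise disjoint proper arcs of the circle and let `g₁, g₂, g₃ ∈ G` with `gᵢ` supported
inside `Iᵢ`. Then for every `g ∈ G` at least one of the following holds:
(1) `[g₁^g, g₁] = 1` or `[g₁^g, g₂] = 1` or `[g₁^g, g₃] = 1`;
(2) there is `i` with `[g₂^g, gᵢ] = 1` and `[g₃^g, gᵢ] = 1`.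
In particular there are `i, j` with `[gᵢ^g, gⱼ] = 1`. -/
theorem circle_disjoint_arcs_commutation
    (G : Subgroup (Equiv.Perm S1))
    (hHomeo : ∀ g ∈ G, IsCircleHomeo g)
    (I₁ I₂ I₃ : Set S1)
    (hI₁ : IsPreconnected I₁) (hI₂ : IsPreconnected I₂) (hI₃ : IsPreconnected I₃)
    (hI₁p : I₁ ≠ univ) (hI₂p : I₂ ≠ univ) (hI₃p : I₃ ≠ univ)
    (hd₁₂ : Disjoint I₁ I₂) (hd₁₃ : Disjoint I₁ I₃) (hd₂₃ : Disjoint I₂ I₃)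
    (g₁ g₂ g₃ : Equiv.Perm S1)
    (hg₁ : g₁ ∈ G) (hg₂ : g₂ ∈ G) (hg₃ : g₃ ∈ G)
    (hs₁ : SupportedIn g₁ I₁) (hs₂ : SupportedIn g₂ I₂) (hs₃ : SupportedIn g₃ I₃) :
    ∀ g ∈ G,
      ((Commute (g * g₁ * g⁻¹) g₁ ∨ Commute (g * g₁ * g⁻¹) g₂ ∨ Commute (g * g₁ * g⁻¹) g₃) ∨
        ((Commute (g * g₂ * g⁻¹) g₁ ∧ Commute (g * g₃ * g⁻¹) g₁) ∨
         (Commute (g * g₂ * g⁻¹) g₂ ∧ Commute (g * g₃ * g⁻¹) g₂) ∨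
         (Commute (g * g₂ * g⁻¹) g₃ ∧ Commute (g * g₃ * g⁻¹) g₃))) ∧
      ∃ i j : Fin 3, Commute (g * (![g₁, g₂, g₃] i) * g⁻¹) (![g₁, g₂, g₃] j) := by
  intro g hg
  obtain ⟨hgc, -⟩ := hHomeo g hg
  have hJ : IsPreconnected (⇑g '' I₁) := hI₁.image _ hgc.continuousOn
  have hsJ := hs₁.conj g
  have hsK := hs₂.conj g
  have hsL := hs₃.conj g
  have himg : ∀ {A B : Set S1}, Disjoint A B → Disjoint (⇑g '' A) (⇑g '' B) :=
    fun h => (Set.disjoint_image_iff g.injective).2 h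
  have meets : ∀ {u v : Equiv.Perm S1} {A B : Set S1}, SupportedIn u A → SupportedIn v B →
      ¬Commute u v → ∃ x, x ∈ A ∧ x ∈ B := by
    intro u v A B hu hv hc
    by_contra h
    push_neg at h
    exact hc (commute_of_disjoint (disjoint_left.2 h) hu hv)
  have key : ((Commute (g * g₁ * g⁻¹) g₁ ∨ Commute (g * g₁ * g⁻¹) g₂ ∨
      Commute (g * g₁ * g⁻¹) g₃) ∨
      ((Commute (g * g₂ * g⁻¹) g₁ ∧ Commute (g * g₃ * g⁻¹) g₁) ∨
       (Commute (g * g₂ * g⁻¹) g₂ ∧ Commute (g * g₃ * g⁻¹) g₂) ∨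
       (Commute (g * g₂ * g⁻¹) g₃ ∧ Commute (g * g₃ * g⁻¹) g₃))) := by
    by_contra hcon
    push_neg at hcon
    obtain ⟨⟨n1, n2, n3⟩, m1, m2, m3⟩ := hcon
    obtain ⟨q₁, hq₁J, hq₁⟩ := meets hsJ hs₁ n1
    obtain ⟨q₂, hq₂J, hq₂⟩ := meets hsJ hs₂ n2
    obtain ⟨q₃, hq₃J, hq₃⟩ := meets hsJ hs₃ n3
    have getc : ∀ (Ii : Set S1) (gi : Equiv.Perm S1), SupportedIn gi Ii →
        ¬(Commute (g * g₂ * g⁻¹) gi ∧ Commute (g * g₃ * g⁻¹) gi) →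
        ∃ c, c ∈ Ii ∧ c ∉ ⇑g '' I₁ := by
      intro Ii gi hgi hm
      rcases not_and_or.1 hm with h | h
      · obtain ⟨c, hcK, hcI⟩ := meets hsK hgi h
        exact ⟨c, hcI, fun hcJ => disjoint_left.1 (himg hd₁₂) hcJ hcK⟩
      · obtain ⟨c, hcL, hcI⟩ := meets hsL hgi h
        exact ⟨c, hcI, fun hcJ => disjoint_left.1 (himg hd₁₃) hcJ hcL⟩
    obtain ⟨c₁, hc₁, hc₁nJ⟩ := getc I₁ g₁ hs₁ (fun hab => m1 hab.1 hab.2)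
    obtain ⟨c₂, hc₂, hc₂nJ⟩ := getc I₂ g₂ hs₂ (fun hab => m2 hab.1 hab.2)
    obtain ⟨c₃, hc₃, hc₃nJ⟩ := getc I₃ g₃ hs₃ (fun hab => m3 hab.1 hab.2)
    obtain ⟨a, -, ha⟩ := AddCircle.eq_coe_Ico q₁
    have haJ : ((a : ℝ) : S1) ∈ ⇑g '' I₁ := ha ▸ hq₁J
    have haI₁ : ((a : ℝ) : S1) ∈ I₁ := ha ▸ hq₁
    have haI₂ : ((a : ℝ) : S1) ∉ I₂ := fun h => disjoint_left.1 hd₁₂ haI₁ h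
    have haI₃ : ((a : ℝ) : S1) ∉ I₃ := fun h => disjoint_left.1 hd₁₃ haI₁ h
    rcases lt_trichotomy (ee a q₂) (ee a c₂) with l₂ | l₂ | l₂
    · rcases lt_trichotomy (ee a q₃) (ee a c₃) with l₃ | l₃ | l₃
      · exact sameA hJ hI₂ hI₃ hd₂₃ haJ haI₂ haI₃ hq₂J hq₂ hc₂ hc₂nJ hq₃J hq₃ hc₃ hc₃nJ l₂ l₃
      · cases ee_inj l₃; exact hc₃nJ hq₃J
      · exact oppo hJ hI₁ hd₁₂ hd₁₃ haJ haI₁ hc₁ hc₁nJ hq₂J hq₂ hc₂ hc₂nJ hq₃J hq₃ hc₃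
          hc₃nJ l₂ l₃
    · cases ee_inj l₂; exact hc₂nJ hq₂J
    · rcases lt_trichotomy (ee a q₃) (ee a c₃) with l₃ | l₃ | l₃
      · exact oppo hJ hI₁ hd₁₃ hd₁₂ haJ haI₁ hc₁ hc₁nJ hq₃J hq₃ hc₃ hc₃nJ hq₂J hq₂ hc₂
          hc₂nJ l₃ l₂
      · cases ee_inj l₃; exact hc₃nJ hq₃J
      · exact sameB hJ hI₂ hI₃ hd₂₃ haJ haI₂ haI₃ hq₂J hq₂ hc₂ hc₂nJ hq₃J hq₃ hc₃ hc₃nJ l₂ l₃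
  refine ⟨key, ?_⟩
  rcases key with (h | h | h) | (⟨h, -⟩ | ⟨h, -⟩ | ⟨h, -⟩)
  · exact ⟨0, 0, by simpa using h⟩
  · exact ⟨0, 1, by simpa using h⟩
  · exact ⟨0, 2, by simpa using h⟩
  · exact ⟨1, 0, by simpa using h⟩
  · exact ⟨1, 1, by simpa using h⟩
  · exact ⟨1, 2, by simpa using h⟩
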